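/- Let n ≥ 2ℓ+1 and let G be a graph on vertex set {x, y} ∪ U_1 ∪ W_2 ∪ U_2 ∪ ⋯ ∪ U_{ℓ−1} ∪ W_ℓ ∪ U_ℓ, where the listed sets are pairwise disjoint and each of the sets U_i, W_i has size at least m. Suppose: (i) xy ∈ E(G); (ii) every vertex of U_1 is adjacent to x and every vertex of U_ℓ is adjacent to y; (iii) for 2 ≤ i ≤ ℓ, every vertex of W_i has at least m/2 neighbours in U_{i−1}, and every vertex of U_i has at least m/2 neighbours in W_i. If m > 14(2ℓ+1), then for every proper edge-colouring ψ of G there exists a rainbow cycle of length 2ℓ+1 through the edge xy. -/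

import Mathlib

lemma pick_aux {V C : Type} (S : Set V) (f g : V → C)
    (hf : Set.InjOn f S) (hg : Set.InjOn g S)
    (cols : List C) (sup : List V)
    (h : sup.length + 2 * cols.length < S.ncard) :
    ∃ v ∈ S, v ∉ sup ∧ f v ∉ cols ∧ g v ∉ cols := by
  classical
  have hfin : S.Finite := Set.finite_of_ncard_ne_zero (by omega)
  set T := hfin.toFinset with hT
  have hTc : T.card = S.ncard := (Set.ncard_eq_toFinset_card _ hfin).symm
  have hTS : ∀ v, v ∈ T ↔ v ∈ S := fun v => hfin.mem_toFinset
  set B : Finset V := T.filter (fun v => v ∈ sup ∨ f v ∈ cols ∨ g v ∈ cols) with hB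
  have h1 : (T.filter (fun v => v ∈ sup)).card ≤ sup.length := by
    calc (T.filter (fun v => v ∈ sup)).card ≤ sup.toFinset.card := by
          apply Finset.card_le_card
          intro v hv
          simp only [Finset.mem_filter] at hv
          exact List.mem_toFinset.2 hv.2
      _ ≤ sup.length := sup.toFinset_card_le
  have key : ∀ φ : V → C, Set.InjOn φ S →
      (T.filter (fun v => φ v ∈ cols)).card ≤ cols.length := by
    intro φ hφ
    calc (T.filter (fun v => φ v ∈ cols)).card ≤ cols.toFinset.card := by
          apply Finset.card_le_card_of_injOn φ
          · intro v hv
            simp only [Finset.coe_filter, Set.mem_setOf_eq] at hv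
            exact List.mem_toFinset.2 hv.2
          · intro a ha b hb hab
            simp only [Finset.coe_filter, Set.mem_setOf_eq] at ha hb
            exact hφ ((hTS a).1 ha.1) ((hTS b).1 hb.1) hab
      _ ≤ cols.length := cols.toFinset_card_le
  have hBcard : B.card ≤ sup.length + 2 * cols.length := by
    have hsub : B ⊆ (T.filter (fun v => v ∈ sup)) ∪
        ((T.filter (fun v => f v ∈ cols)) ∪ (T.filter (fun v => g v ∈ cols))) := by
      intro v hv
      simp only [hB, Finset.mem_filter, Finset.mem_union] at hv ⊢
      tauto
    calc B.card ≤ _ := Finset.card_le_card hsub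
      _ ≤ (T.filter (fun v => v ∈ sup)).card +
          ((T.filter (fun v => f v ∈ cols)) ∪ (T.filter (fun v => g v ∈ cols))).card :=
        Finset.card_union_le _ _
      _ ≤ (T.filter (fun v => v ∈ sup)).card +
          ((T.filter (fun v => f v ∈ cols)).card + (T.filter (fun v => g v ∈ cols)).card) := by
        gcongr; exact Finset.card_union_le _ _
      _ ≤ sup.length + 2 * cols.length := by
        have := key f hf; have := key g hg; omega
  have hne : (T \ B).Nonempty := by
    rw [← Finset.card_pos]
    have := Finset.le_card_sdiff B T
    omega
  obtain ⟨v, hv⟩ := hne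
  rw [Finset.mem_sdiff] at hv
  obtain ⟨hvT, hvB⟩ := hv
  simp only [hB, Finset.mem_filter, not_and, not_or] at hvB
  have := hvB hvT
  exact ⟨v, (hTS v).1 hvT, this.1, this.2.1, this.2.2⟩

/-- The layered cylinder structure (vertex set
`{x, y} ∪ U 1 ∪ W 2 ∪ U 2 ∪ ⋯ ∪ W ℓ ∪ U ℓ`, pairwise disjoint sets of size at least
`m`, with `xy ∈ E(G)`, `U 1 ⊆ N(x)`, `U ℓ ⊆ N(y)` and min-degree `m/2` between
consecutive layers) guarantees, when `m > 14(2ℓ+1)`, that every proper edge-colouring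
admits a rainbow cycle of length `2ℓ+1` through the edge `xy`. -/
theorem stmt_17 {V : Type} (ℓ m : ℕ) (hl : 1 ≤ ℓ)
    (hm : 14 * (2 * ℓ + 1) < m)
    (G : SimpleGraph V) (x y : V)
    (U Wst : ℕ → Set V)
    (hxy : x ≠ y)
    (hcover : ∀ v : V, v = x ∨ v = y ∨ (∃ i, 1 ≤ i ∧ i ≤ ℓ ∧ v ∈ U i) ∨
      (∃ i, 2 ≤ i ∧ i ≤ ℓ ∧ v ∈ Wst i))
    (hxyU : ∀ i, 1 ≤ i → i ≤ ℓ → x ∉ U i ∧ y ∉ U i)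
    (hxyW : ∀ i, 2 ≤ i → i ≤ ℓ → x ∉ Wst i ∧ y ∉ Wst i)
    (hUdisj : ∀ i j, 1 ≤ i → i ≤ ℓ → 1 ≤ j → j ≤ ℓ → i ≠ j → Disjoint (U i) (U j))
    (hWdisj : ∀ i j, 2 ≤ i → i ≤ ℓ → 2 ≤ j → j ≤ ℓ → i ≠ j →
      Disjoint (Wst i) (Wst j))
    (hUW : ∀ i j, 1 ≤ i → i ≤ ℓ → 2 ≤ j → j ≤ ℓ → Disjoint (U i) (Wst j))
    (hUsize : ∀ i, 1 ≤ i → i ≤ ℓ → m ≤ (U i).ncard)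
    (hWsize : ∀ i, 2 ≤ i → i ≤ ℓ → m ≤ (Wst i).ncard)
    (hedge : G.Adj x y)
    (hU1 : ∀ u ∈ U 1, G.Adj x u)
    (hUl : ∀ u ∈ U ℓ, G.Adj y u)
    (hWdeg : ∀ i, 2 ≤ i → i ≤ ℓ → ∀ w ∈ Wst i,
      m ≤ 2 * {u ∈ U (i - 1) | G.Adj w u}.ncard)
    (hUdeg : ∀ i, 2 ≤ i → i ≤ ℓ → ∀ u ∈ U i,
      m ≤ 2 * {w ∈ Wst i | G.Adj u w}.ncard)
    (Col : Type) (ψ : Sym2 V → Col)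
    (hproper : ∀ a b c, G.Adj a b → G.Adj a c → b ≠ c → ψ s(a, b) ≠ ψ s(a, c)) :
    ∃ w : G.Walk x x, w.IsCycle ∧ w.length = 2 * ℓ + 1 ∧ s(x, y) ∈ w.edges ∧
      (w.edges.map ψ).Nodup := by
  classical
  have hψinj : ∀ (a : V) (S : Set V), (∀ v ∈ S, G.Adj a v) →
      Set.InjOn (fun v => ψ s(a, v)) S := by
    intro a S hS v1 h1 v2 h2 heq
    by_contra hne
    exact hproper a v1 v2 (hS _ h1) (hS _ h2) hne heq
  have key : ∀ k, k ≤ ℓ - 1 → ∃ (u : V) (p : G.Walk y u),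
      u ∈ U (ℓ - k) ∧ p.IsPath ∧ p.length = 2 * k + 1 ∧
      (ψ s(x, y) :: p.edges.map ψ).Nodup ∧
      (∀ v ∈ p.support, v = y ∨ (∃ j, ℓ - k ≤ j ∧ j ≤ ℓ ∧ v ∈ U j) ∨
        (∃ j, ℓ - k + 1 ≤ j ∧ j ≤ ℓ ∧ v ∈ Wst j)) ∧
      (ℓ - k = 1 → ψ s(x, u) ∉ (ψ s(x, y) :: p.edges.map ψ)) := by
    intro k
    induction k with
    | zero =>
      intro _
      -- pick any u ∈ U ℓ
      have hne : (U ℓ).Nonempty := by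
        apply Set.nonempty_of_ncard_ne_zero
        have := hUsize ℓ hl le_rfl
        omega
      obtain ⟨u, hu⟩ := hne
      have hadj : G.Adj y u := hUl u hu
      have hux : u ≠ x := fun h => (hxyU ℓ hl le_rfl).1 (h ▸ hu)
      have huy : u ≠ y := fun h => (hxyU ℓ hl le_rfl).2 (h ▸ hu)
      refine ⟨u, SimpleGraph.Walk.cons hadj SimpleGraph.Walk.nil, by simpa using hu, ?_, by simp, ?_, ?_, ?_⟩
      · rw [SimpleGraph.Walk.cons_isPath_iff]
        exact ⟨SimpleGraph.Walk.IsPath.nil, by simp [huy.symm]⟩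
      · -- nodup [ψ s(x,y), ψ s(y,u)]
        have : ψ s(x, y) ≠ ψ s(y, u) := by
          have := hproper y x u hedge.symm hadj (Ne.symm hux)
          rwa [Sym2.eq_swap (a := y) (b := x)] at this
        simp [this]
      · intro v hv
        simp only [SimpleGraph.Walk.support_cons, SimpleGraph.Walk.support_nil,
          List.mem_cons, List.mem_singleton] at hv
        rcases hv with h | h | h
        · exact Or.inl h
        · exact Or.inr (Or.inl ⟨ℓ, by omega, le_rfl, h ▸ hu⟩)
        · simp at h
      · intro hℓ1
        have hu1 : u ∈ U 1 := by rw [show ℓ = 1 by omega] at hu; exact hu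
        have hxu : G.Adj x u := hU1 u hu1
        have e1 : ψ s(x, u) ≠ ψ s(x, y) := hproper x u y hxu hedge huy
        have e2 : ψ s(x, u) ≠ ψ s(y, u) := by
          rw [Sym2.eq_swap (a := x) (b := u), Sym2.eq_swap (a := y) (b := u)]
          exact hproper u x y hxu.symm hadj.symm hxy
        simp [e1, e2]
    | succ k ih =>
      intro hk1
      obtain ⟨u, p, hu, hpath, hlen, hnodup, hsupp, -⟩ := ih (by omega)
      clear ih
      set i := ℓ - k with hidef
      clear_value i
      have hi2 : 2 ≤ i := by omega
      have hiℓ : i ≤ ℓ := by omega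
      have hik : ℓ - (k + 1) = i - 1 := by omega
      have hkℓ : k + 2 ≤ ℓ := by omega
      have hedgelen : p.edges.length = 2 * k + 1 := by
        rw [SimpleGraph.Walk.length_edges]; exact hlen
      have hsuplen : p.support.length = 2 * k + 2 := by
        rw [SimpleGraph.Walk.length_support]; omega
      -- Step A: choose w ∈ Wst i adjacent to u
      set S₁ : Set V := {w | w ∈ Wst i ∧ G.Adj u w} with hS₁def
      have hS₁ : m ≤ 2 * S₁.ncard := hUdeg i hi2 hiℓ u hu
      have hinj₁ : Set.InjOn (fun v => ψ s(u, v)) S₁ :=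
        hψinj u S₁ (fun v hv => hv.2)
      obtain ⟨w, hwS, hwsup, hwcol, -⟩ := pick_aux S₁ (fun v => ψ s(u, v))
        (fun v => ψ s(u, v)) hinj₁ hinj₁ (ψ s(x, y) :: p.edges.map ψ) p.support
        (by simp only [List.length_cons, List.length_map, hsuplen, hedgelen]; omega)
      have hww : G.Adj u w := hwS.2
      have hwW : w ∈ Wst i := hwS.1
      set p₁ : G.Walk y w := p.concat hww with hp₁def
      have hp₁path : p₁.IsPath := by
        rw [SimpleGraph.Walk.isPath_def, hp₁def, SimpleGraph.Walk.support_concat,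
          List.nodup_append]
        refine ⟨hpath.support_nodup, List.nodup_singleton w, ?_⟩
        intro a ha b hb
        rw [List.mem_singleton] at hb
        subst hb
        rintro rfl
        exact hwsup ha
      have hp₁edges : p₁.edges = p.edges ++ [s(u, w)] := by
        rw [hp₁def, SimpleGraph.Walk.edges_concat, List.concat_eq_append]
      have hnodup₁ : (ψ s(x, y) :: p₁.edges.map ψ).Nodup := by
        rw [hp₁edges]
        simp only [List.map_append, List.map_cons, List.map_nil]
        rw [← List.cons_append, List.nodup_append]
        refine ⟨hnodup, List.nodup_singleton _, ?_⟩
        intro a ha b hb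
        rw [List.mem_singleton] at hb
        subst hb
        rintro rfl
        exact hwcol ha
      have hp₁suplen : p₁.support.length = 2 * k + 3 := by
        rw [hp₁def, SimpleGraph.Walk.support_concat,
          List.length_append]; simp [hsuplen]
      have hp₁edgelen : p₁.edges.length = 2 * k + 2 := by
        rw [hp₁edges, List.length_append]; simp [hedgelen]
      -- Step B: choose u' ∈ U (i-1) adjacent to w
      set S₂ : Set V := {v | v ∈ U (i - 1) ∧ G.Adj w v} with hS₂def
      have hS₂ : m ≤ 2 * S₂.ncard := hWdeg i hi2 hiℓ w hwW
      have hinj₂ : Set.InjOn (fun v => ψ s(w, v)) S₂ :=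
        hψinj w S₂ (fun v hv => hv.2)
      set g₂ : V → Col := if i - 1 = 1 then (fun v => ψ s(x, v)) else (fun v => ψ s(w, v))
        with hg₂def
      have hinjg₂ : Set.InjOn g₂ S₂ := by
        by_cases h1 : i - 1 = 1
        · rw [hg₂def, if_pos h1]
          exact hψinj x S₂ (fun v hv => hU1 v (h1 ▸ hv.1))
        · rw [hg₂def, if_neg h1]; exact hinj₂
      obtain ⟨u', hu'S, hu'sup, hcol1, hcol2⟩ := pick_aux S₂ (fun v => ψ s(w, v))
        g₂ hinj₂ hinjg₂ (ψ s(x, y) :: p₁.edges.map ψ) p₁.support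
        (by simp only [List.length_cons, List.length_map, hp₁suplen, hp₁edgelen]; omega)
      have hwu' : G.Adj w u' := hu'S.2
      have hu'U : u' ∈ U (i - 1) := hu'S.1
      set p₂ : G.Walk y u' := p₁.concat hwu' with hp₂def
      have hp₂edges : p₂.edges = p₁.edges ++ [s(w, u')] := by
        rw [hp₂def, SimpleGraph.Walk.edges_concat, List.concat_eq_append]
      have hnodup₂ : (ψ s(x, y) :: p₂.edges.map ψ).Nodup := by
        rw [hp₂edges]
        simp only [List.map_append, List.map_cons, List.map_nil]
        rw [← List.cons_append, List.nodup_append]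
        refine ⟨hnodup₁, List.nodup_singleton _, ?_⟩
        intro a ha b hb
        rw [List.mem_singleton] at hb
        subst hb
        rintro rfl
        exact hcol1 ha
      refine ⟨u', p₂, by rw [hik]; exact hu'U, ?_, ?_, hnodup₂, ?_, ?_⟩
      · rw [SimpleGraph.Walk.isPath_def, hp₂def, SimpleGraph.Walk.support_concat,
          List.nodup_append]
        refine ⟨hp₁path.support_nodup, List.nodup_singleton _, ?_⟩
        intro a ha b hb
        rw [List.mem_singleton] at hb
        subst hb
        rintro rfl
        exact hu'sup ha
      · rw [hp₂def, SimpleGraph.Walk.length_concat, hp₁def,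
          SimpleGraph.Walk.length_concat, hlen]; ring
      · intro v hv
        rw [hp₂def, SimpleGraph.Walk.support_concat,
          List.mem_append, hp₁def, SimpleGraph.Walk.support_concat,
          List.mem_append] at hv
        rcases hv with (hv | hv) | hv
        · rcases hsupp v hv with h | ⟨j, hj1, hj2, hj3⟩ | ⟨j, hj1, hj2, hj3⟩
          · exact Or.inl h
          · exact Or.inr (Or.inl ⟨j, by omega, hj2, hj3⟩)
          · exact Or.inr (Or.inr ⟨j, by omega, hj2, hj3⟩)
        · simp only [List.mem_singleton] at hv
          exact Or.inr (Or.inr ⟨i, by omega, hiℓ, hv ▸ hwW⟩)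
        · simp only [List.mem_singleton] at hv
          exact Or.inr (Or.inl ⟨i - 1, by omega, by omega, hv ▸ hu'U⟩)
      · intro h1
        rw [hik] at h1
        have hxu' : G.Adj x u' := hU1 u' (h1 ▸ hu'U)
        have hg : ψ s(x, u') ∉ (ψ s(x, y) :: p₁.edges.map ψ) := by
          have := hcol2
          rw [hg₂def, if_pos h1] at this
          exact this
        have hxw : x ≠ w := fun h => (hxyW i hi2 hiℓ).1 (h ▸ hwW)
        have hne : ψ s(x, u') ≠ ψ s(w, u') := by
          rw [Sym2.eq_swap (a := x) (b := u'), Sym2.eq_swap (a := w) (b := u')]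
          exact hproper u' x w hxu'.symm hwu'.symm hxw
        rw [hp₂edges]
        simp only [List.map_append, List.map_cons, List.map_nil]
        rw [← List.cons_append, List.mem_append]
        push_neg
        exact ⟨hg, by simpa using hne⟩
  obtain ⟨u, p, hu, hpath, hlen, hnodup, hsupp, hxcond⟩ := key (ℓ - 1) le_rfl
  have h1 : ℓ - (ℓ - 1) = 1 := by omega
  rw [h1] at hu hsupp hxcond
  have hu1 : u ∈ U 1 := hu
  have hxcond' : ψ s(x, u) ∉ (ψ s(x, y) :: p.edges.map ψ) := hxcond rfl
  have hadjux : G.Adj u x := (hU1 u hu1).symm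
  have hyu : y ≠ u := fun h => (hxyU 1 le_rfl hl).2 (h ▸ hu1)
  have hxsup : x ∉ p.support := by
    intro hx
    rcases hsupp x hx with h | ⟨j, hj1, hj2, hj3⟩ | ⟨j, hj1, hj2, hj3⟩
    · exact hxy h
    · exact (hxyU j hj1 hj2).1 hj3
    · exact (hxyW j (by omega) hj2).1 hj3
  set q : G.Walk y x := p.concat hadjux with hqdef
  have hqedges : q.edges = p.edges ++ [s(u, x)] := by
    rw [hqdef, SimpleGraph.Walk.edges_concat, List.concat_eq_append]
  have hqpath : q.IsPath := by
    rw [SimpleGraph.Walk.isPath_def, hqdef, SimpleGraph.Walk.support_concat,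
      List.nodup_append]
    refine ⟨hpath.support_nodup, List.nodup_singleton _, ?_⟩
    intro a ha b hb
    rw [List.mem_singleton] at hb
    subst hb
    rintro rfl
    exact hxsup ha
  refine ⟨SimpleGraph.Walk.cons hedge q, ?_, ?_, ?_, ?_⟩
  · rw [SimpleGraph.Walk.cons_isCycle_iff]
    refine ⟨hqpath, ?_⟩
    rw [hqedges, List.mem_append]
    rintro (h | h)
    · have : ψ s(x, y) ∈ p.edges.map ψ := List.mem_map_of_mem (f := ψ) h
      exact (List.nodup_cons.1 hnodup).1 this
    · rw [List.mem_singleton, Sym2.eq_iff] at h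
      rcases h with ⟨h1, h2⟩ | ⟨h1, h2⟩
      · exact hxy h2.symm
      · exact hyu h2
  · rw [SimpleGraph.Walk.length_cons, hqdef, SimpleGraph.Walk.length_concat, hlen]
    omega
  · rw [SimpleGraph.Walk.edges_cons]
    exact List.mem_cons_self
  · rw [SimpleGraph.Walk.edges_cons, hqedges, List.map_cons, List.map_append]
    simp only [List.map_cons, List.map_nil]
    rw [← List.cons_append, List.nodup_append]
    refine ⟨hnodup, List.nodup_singleton _, ?_⟩
    intro a ha b hb
    rw [List.mem_singleton] at hb
    subst hb
    rintro rfl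
    rw [Sym2.eq_swap (a := u) (b := x)] at ha
    exact hxcond' ha
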